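/- Let D ⊂ ℝ^d be a compact set with finite positive Lebesgue measure |D|, J = [0,T] with T > 0, k ∈ L²(D×D), f ∈ BC¹(ℝ), g ∈ C⁰(J, L²(D)), and v ∈ L²(D). Define the Volterra operator φ(u)(t) = v + ∫₀ᵗ [−u(s) + H(k)(f∘u(s)) + g(s)] ds for u ∈ C⁰(J, L²(D)), and set κ_N = 1 + κ_D ‖k‖_{L²(D×D)} ‖f'‖_∞ with κ_D = max(1, √|D|). Then φ maps C⁰(J, L²(D)) into C¹(J, L²(D)), and for all u, ū ∈ C⁰(J, L²(D)): ‖φ(u) − φ(ū)‖_{C⁰(J,L²(D))} ≤ T κ_N ‖u − ū‖_{C⁰(J,L²(D))} and ‖φ(u) − φ(ū)‖_{C¹(J,L²(D))} ≤ (1+T) κ_N ‖u − ū‖_{C⁰(J,L²(D))}. -/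

import Mathlib

open MeasureTheory Set

private lemma l2_norm_sq {α : Type*} [MeasurableSpace α] {μ : Measure α} (f : Lp ℝ 2 μ) :
    ‖f‖ ^ 2 = ∫ x, (f x) ^ 2 ∂μ := by
  rw [← real_inner_self_eq_norm_sq, L2.inner_def]
  refine integral_congr_ae (Filter.Eventually.of_forall fun x => ?_)
  simp [RCLike.inner_apply, conj_trivial, sq]

private lemma hs_bound {α : Type*} [MeasurableSpace α] {μ : Measure α} [IsFiniteMeasure μ]
    (k : Lp ℝ 2 (μ.prod μ)) (w Hw : Lp ℝ 2 μ)
    (h : (Hw : α → ℝ) =ᵐ[μ] fun x => ∫ x', k (x, x') * w x' ∂μ) :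
    ‖Hw‖ ≤ ‖k‖ * ‖w‖ := by
  have hk2 : Integrable (fun p : α × α => (k p) ^ 2) (μ.prod μ) := (Lp.memLp k).integrable_sq
  have hsl : ∀ᵐ x ∂μ, Integrable (fun y => (k (x, y)) ^ 2) μ := hk2.prod_right_ae
  obtain ⟨K, hKm, hkK⟩ : ∃ K, StronglyMeasurable K ∧ (k : α × α → ℝ) =ᵐ[μ.prod μ] K :=
    ⟨_, (Lp.aestronglyMeasurable k).stronglyMeasurable_mk, (Lp.aestronglyMeasurable k).ae_eq_mk⟩
  have hae : ∀ᵐ x ∂μ, (fun y => k (x, y)) =ᵐ[μ] fun y => K (x, y) := Measure.ae_ae_of_ae_prod hkK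
  have key : ∀ᵐ x ∂μ, (Hw x) ^ 2 ≤ (∫ y, (k (x, y)) ^ 2 ∂μ) * ‖w‖ ^ 2 := by
    filter_upwards [h, hsl, hae] with x hx h1 h2
    have hmemx : MemLp (fun y => k (x, y)) 2 μ := by
      have hm : AEStronglyMeasurable (fun y => k (x, y)) μ :=
        ((hKm.comp_measurable measurable_prodMk_left).aestronglyMeasurable).congr h2.symm
      exact (memLp_two_iff_integrable_sq hm).mpr h1
    set Kx : Lp ℝ 2 μ := hmemx.toLp _ with hKxdef
    have hKx : (Kx : α → ℝ) =ᵐ[μ] fun y => k (x, y) := hmemx.coeFn_toLp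
    have e1 : (inner ℝ Kx w : ℝ) = ∫ y, k (x, y) * w y ∂μ := by
      rw [L2.inner_def]
      refine integral_congr_ae ?_
      filter_upwards [hKx] with y hy
      simp [RCLike.inner_apply, conj_trivial, hy, mul_comm]
    have e2 : ‖Kx‖ ^ 2 = ∫ y, (k (x, y)) ^ 2 ∂μ := by
      rw [l2_norm_sq]
      refine integral_congr_ae ?_
      filter_upwards [hKx] with y hy
      rw [hy]
    calc (Hw x) ^ 2 = (inner ℝ Kx w : ℝ) ^ 2 := by rw [e1, hx]
      _ ≤ (‖Kx‖ * ‖w‖) ^ 2 := by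
          have h3 := abs_real_inner_le_norm Kx w
          calc (inner ℝ Kx w : ℝ) ^ 2 = |(inner ℝ Kx w : ℝ)| ^ 2 := (sq_abs _).symm
            _ ≤ (‖Kx‖ * ‖w‖) ^ 2 := pow_le_pow_left₀ (abs_nonneg _) h3 2
      _ = (∫ y, (k (x, y)) ^ 2 ∂μ) * ‖w‖ ^ 2 := by rw [mul_pow, e2]
  have hInt1 : Integrable (fun x => (Hw x) ^ 2) μ := (Lp.memLp Hw).integrable_sq
  have hInt2 : Integrable (fun x => (∫ y, (k (x, y)) ^ 2 ∂μ) * ‖w‖ ^ 2) μ :=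
    hk2.integral_prod_left.mul_const _
  have hHw2 : ‖Hw‖ ^ 2 ≤ ‖k‖ ^ 2 * ‖w‖ ^ 2 := by
    have h2 : ‖k‖ ^ 2 = ∫ x, ∫ y, (k (x, y)) ^ 2 ∂μ ∂μ := by
      rw [l2_norm_sq, ← integral_prod _ hk2]
    calc ‖Hw‖ ^ 2 = ∫ x, (Hw x) ^ 2 ∂μ := l2_norm_sq Hw
      _ ≤ ∫ x, (∫ y, (k (x, y)) ^ 2 ∂μ) * ‖w‖ ^ 2 ∂μ := integral_mono_ae hInt1 hInt2 key
      _ = (∫ x, ∫ y, (k (x, y)) ^ 2 ∂μ ∂μ) * ‖w‖ ^ 2 := integral_mul_const _ _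
      _ = ‖k‖ ^ 2 * ‖w‖ ^ 2 := by rw [h2]
  calc ‖Hw‖ = Real.sqrt (‖Hw‖ ^ 2) := (Real.sqrt_sq (norm_nonneg _)).symm
    _ ≤ Real.sqrt (‖k‖ ^ 2 * ‖w‖ ^ 2) := Real.sqrt_le_sqrt hHw2
    _ = ‖k‖ * ‖w‖ := by rw [← mul_pow, Real.sqrt_sq (by positivity)]

set_option maxHeartbeats 1000000 in
set_option synthInstance.maxHeartbeats 400000 in
/-- The Volterra operator
`φ(u)(t) = v + ∫₀ᵗ [−u(s) + H(k)(f∘u(s)) + g(s)] ds` maps `C⁰(J, L²(D))` into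
`C¹(J, L²(D))` and satisfies the Lipschitz estimates
`‖φ(u)−φ(ū)‖_{C⁰} ≤ T κ_N ‖u−ū‖_{C⁰}` and `‖φ(u)−φ(ū)‖_{C¹} ≤ (1+T) κ_N ‖u−ū‖_{C⁰}`,
with `κ_N = 1 + κ_D ‖k‖ ‖f'‖_∞`. -/
theorem stmt8 (d : ℕ) (D : Set (EuclideanSpace ℝ (Fin d)))
    (hD : IsCompact D) (hpos : 0 < volume D) (hfin : volume D < ⊤)
    (T : ℝ) (hT : 0 < T)
    (k : Lp ℝ 2 ((volume.restrict D).prod (volume.restrict D)))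
    (Hk : Lp ℝ 2 (volume.restrict D) →L[ℝ] Lp ℝ 2 (volume.restrict D))
    (hHk : ∀ v : Lp ℝ 2 (volume.restrict D),
      (Hk v : _ → ℝ) =ᵐ[volume.restrict D]
        fun x => ∫ x', k (x, x') * v x' ∂(volume.restrict D))
    (f : ℝ → ℝ) (hf : ContDiff ℝ 1 f)
    (hfb : ∃ C, ∀ s : ℝ, |f s| ≤ C) (hfb' : ∃ C, ∀ s : ℝ, |deriv f s| ≤ C)
    (F : Lp ℝ 2 (volume.restrict D) → Lp ℝ 2 (volume.restrict D))
    (hF : ∀ u : Lp ℝ 2 (volume.restrict D),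
      (F u : _ → ℝ) =ᵐ[volume.restrict D] fun x => f (u x))
    (g : C(Set.Icc (0:ℝ) T, Lp ℝ 2 (volume.restrict D)))
    (v : Lp ℝ 2 (volume.restrict D))
    -- the Volterra operator `φ`, written with values extended to `ℝ` via `projIcc`
    (Φ : C(Set.Icc (0:ℝ) T, Lp ℝ 2 (volume.restrict D)) → ℝ → Lp ℝ 2 (volume.restrict D))
    (hΦ : ∀ u t, Φ u t = v + ∫ s in (0:ℝ)..t,
      (-(u (Set.projIcc 0 T hT.le s)) + Hk (F (u (Set.projIcc 0 T hT.le s))) +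
        g (Set.projIcc 0 T hT.le s))) :
    -- φ maps C⁰(J, L²(D)) into C¹(J, L²(D)):
    (∀ u, ∀ t ∈ Set.Icc (0:ℝ) T,
      HasDerivWithinAt (Φ u)
        (-(u (Set.projIcc 0 T hT.le t)) + Hk (F (u (Set.projIcc 0 T hT.le t))) +
          g (Set.projIcc 0 T hT.le t))
        (Set.Icc (0:ℝ) T) t) ∧
    (∀ u : C(Set.Icc (0:ℝ) T, Lp ℝ 2 (volume.restrict D)), ContinuousOn (fun t : ℝ =>
      -(u (Set.projIcc 0 T hT.le t)) + Hk (F (u (Set.projIcc 0 T hT.le t))) +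
        g (Set.projIcc 0 T hT.le t)) (Set.Icc (0:ℝ) T)) ∧
    -- C⁰ Lipschitz estimate:
    (∀ u ubar, ∀ t ∈ Set.Icc (0:ℝ) T,
      ‖Φ u t - Φ ubar t‖ ≤
        T * (1 + max 1 (Real.sqrt (volume D).toReal) * ‖k‖ * (⨆ s : ℝ, |deriv f s|)) *
          ‖u - ubar‖) ∧
    -- C¹ Lipschitz estimate (sup of values plus sup of derivatives):
    (∀ u ubar, ∀ s ∈ Set.Icc (0:ℝ) T, ∀ t ∈ Set.Icc (0:ℝ) T,
      ‖Φ u s - Φ ubar s‖ +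
        ‖(-(u (Set.projIcc 0 T hT.le t)) + Hk (F (u (Set.projIcc 0 T hT.le t))) +
            g (Set.projIcc 0 T hT.le t)) -
          (-(ubar (Set.projIcc 0 T hT.le t)) + Hk (F (ubar (Set.projIcc 0 T hT.le t))) +
            g (Set.projIcc 0 T hT.le t))‖ ≤
        (1 + T) * (1 + max 1 (Real.sqrt (volume D).toReal) * ‖k‖ * (⨆ s : ℝ, |deriv f s|)) *
          ‖u - ubar‖) := by
  haveI : IsFiniteMeasure (volume.restrict D) :=
    ⟨by simpa [Measure.restrict_apply_univ] using hfin⟩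
  set L := ⨆ s : ℝ, |deriv f s| with hLdef
  obtain ⟨C, hC⟩ := hfb'
  have hBdd : BddAbove (Set.range fun s : ℝ => |deriv f s|) :=
    ⟨C, by rintro _ ⟨s, rfl⟩; exact hC s⟩
  have hLs : ∀ s, |deriv f s| ≤ L := fun s => le_ciSup hBdd s
  have hL0 : 0 ≤ L := (abs_nonneg _).trans (hLs 0)
  have hflip : ∀ a b : ℝ, |f a - f b| ≤ L * |a - b| := fun a b =>
    Convex.norm_image_sub_le_of_norm_deriv_le
      (fun x _ => (hf.differentiable one_ne_zero).differentiableAt)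
      (fun x _ => hLs x) convex_univ (mem_univ b) (mem_univ a)
  have hFlip : ∀ a b : Lp ℝ 2 (volume.restrict D), ‖F a - F b‖ ≤ L * ‖a - b‖ := by
    intro a b
    refine Lp.norm_le_mul_norm_of_ae_le_mul ?_
    filter_upwards [hF a, hF b, Lp.coeFn_sub (F a) (F b), Lp.coeFn_sub a b] with x h1 h2 h3 h4
    rw [h3, Pi.sub_apply, h1, h2, h4, Pi.sub_apply]
    exact hflip _ _
  have hHkF : ∀ a b, ‖Hk (F a) - Hk (F b)‖ ≤ (‖k‖ * L) * ‖a - b‖ := by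
    intro a b
    rw [← map_sub]
    calc ‖Hk (F a - F b)‖ ≤ ‖k‖ * ‖F a - F b‖ := hs_bound k _ _ (hHk _)
      _ ≤ ‖k‖ * (L * ‖a - b‖) := mul_le_mul_of_nonneg_left (hFlip a b) (norm_nonneg k)
      _ = (‖k‖ * L) * ‖a - b‖ := by ring
  set κD := max 1 (Real.sqrt (volume D).toReal) with hκDdef
  set κ := 1 + κD * ‖k‖ * L with hκdef
  have hκD1 : (1:ℝ) ≤ κD := le_max_left _ _
  have hκ0 : (0:ℝ) ≤ κ := by
    have : (0:ℝ) ≤ κD * ‖k‖ * L := by positivity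
    linarith
  have hlip' : ∀ (a b c : Lp ℝ 2 (volume.restrict D)),
      ‖(-a + Hk (F a) + c) - (-b + Hk (F b) + c)‖ ≤ κ * ‖a - b‖ := by
    intro a b c
    have he : (-a + Hk (F a) + c) - (-b + Hk (F b) + c)
        = (b - a) + (Hk (F a) - Hk (F b)) := by abel
    rw [he]
    calc ‖(b - a) + (Hk (F a) - Hk (F b))‖ ≤ ‖b - a‖ + ‖Hk (F a) - Hk (F b)‖ := norm_add_le _ _
      _ ≤ ‖a - b‖ + (‖k‖ * L) * ‖a - b‖ := by
          rw [norm_sub_rev]; exact add_le_add le_rfl (hHkF a b)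
      _ ≤ κ * ‖a - b‖ := by
          rw [hκdef]
          nlinarith [mul_nonneg (sub_nonneg.mpr hκD1)
            (mul_nonneg (mul_nonneg (norm_nonneg k) hL0) (norm_nonneg (a - b)))]
  set I : C(Set.Icc (0:ℝ) T, Lp ℝ 2 (volume.restrict D)) → ℝ → Lp ℝ 2 (volume.restrict D) :=
    fun u t => -(u (Set.projIcc 0 T hT.le t)) + Hk (F (u (Set.projIcc 0 T hT.le t))) +
      g (Set.projIcc 0 T hT.le t) with hIdef
  have hHkFcont : Continuous fun a : Lp ℝ 2 (volume.restrict D) => Hk (F a) := by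
    have hl : LipschitzWith (‖k‖ * L).toNNReal fun a => Hk (F a) := by
      apply LipschitzWith.of_dist_le_mul
      intro a b
      rw [dist_eq_norm, dist_eq_norm]
      exact (hHkF a b).trans (mul_le_mul_of_nonneg_right (Real.le_coe_toNNReal _) (norm_nonneg _))
    exact hl.continuous
  have hIcont : ∀ u, Continuous (I u) := by
    intro u
    have c0 : Continuous fun t : ℝ => u (Set.projIcc 0 T hT.le t) :=
      u.continuous.comp continuous_projIcc
    exact (c0.neg.add (hHkFcont.comp c0)).add (g.continuous.comp continuous_projIcc)
  have hΦ' : ∀ u t, Φ u t = v + ∫ s in (0:ℝ)..t, I u s := hΦ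
  have hsup : ∀ (u ubar : C(Set.Icc (0:ℝ) T, Lp ℝ 2 (volume.restrict D)))
      (x : Set.Icc (0:ℝ) T), ‖u x - ubar x‖ ≤ ‖u - ubar‖ := by
    intro u ubar x
    calc ‖u x - ubar x‖ = ‖(u - ubar) x‖ := by rw [ContinuousMap.sub_apply]
      _ ≤ ‖u - ubar‖ := ContinuousMap.norm_coe_le_norm _ x
  have hIlip : ∀ u ubar s, ‖I u s - I ubar s‖ ≤ κ * ‖u - ubar‖ := by
    intro u ubar s
    exact (hlip' _ _ _).trans (mul_le_mul_of_nonneg_left (hsup u ubar _) hκ0)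
  have hpart3 : ∀ u ubar, ∀ t ∈ Set.Icc (0:ℝ) T,
      ‖Φ u t - Φ ubar t‖ ≤ T * κ * ‖u - ubar‖ := by
    intro u ubar t ht
    have h1 : Φ u t - Φ ubar t = ∫ s in (0:ℝ)..t, (I u s - I ubar s) := by
      rw [hΦ' u t, hΦ' ubar t, add_sub_add_left_eq_sub, ← intervalIntegral.integral_sub
        ((hIcont u).intervalIntegrable _ _) ((hIcont ubar).intervalIntegrable _ _)]
    rw [h1]
    have h2 : ‖∫ s in (0:ℝ)..t, (I u s - I ubar s)‖ ≤ (κ * ‖u - ubar‖) * |t - 0| :=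
      intervalIntegral.norm_integral_le_of_norm_le_const fun s _ => hIlip u ubar s
    have h3 : (0:ℝ) ≤ κ * ‖u - ubar‖ := mul_nonneg hκ0 (norm_nonneg _)
    calc ‖∫ s in (0:ℝ)..t, (I u s - I ubar s)‖ ≤ (κ * ‖u - ubar‖) * |t - 0| := h2
      _ ≤ (κ * ‖u - ubar‖) * T := by
          rw [sub_zero, abs_of_nonneg ht.1]
          exact mul_le_mul_of_nonneg_left ht.2 h3
      _ = T * κ * ‖u - ubar‖ := by ring
  refine ⟨?_, fun u => (hIcont u).continuousOn, hpart3, ?_⟩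
  · intro u t ht
    have hΦfun : Φ u = fun t => v + ∫ s in (0:ℝ)..t, I u s := funext (hΦ' u)
    rw [show (-(u (Set.projIcc 0 T hT.le t)) + Hk (F (u (Set.projIcc 0 T hT.le t))) +
        g (Set.projIcc 0 T hT.le t)) = I u t from rfl, hΦfun]
    have hd : HasDerivAt (fun t => ∫ s in (0:ℝ)..t, I u s) (I u t) t :=
      intervalIntegral.integral_hasDerivAt_right ((hIcont u).intervalIntegrable _ _)
        ((hIcont u).stronglyMeasurable.stronglyMeasurableAtFilter) (hIcont u).continuousAt
    exact (hd.const_add v).hasDerivWithinAt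
  · intro u ubar s hs t ht
    have h1 := hpart3 u ubar s hs
    have h2 : ‖I u t - I ubar t‖ ≤ κ * ‖u - ubar‖ := hIlip u ubar t
    have h3 : (0:ℝ) ≤ ‖u - ubar‖ := norm_nonneg _
    calc ‖Φ u s - Φ ubar s‖ + ‖I u t - I ubar t‖
        ≤ T * κ * ‖u - ubar‖ + κ * ‖u - ubar‖ := add_le_add h1 h2
      _ = (1 + T) * κ * ‖u - ubar‖ := by ring
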